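/- arXiv:1705.03488 — 3 statements merged into one kernel-verified Lean document; each statement's English description precedes it below -/
import Mathlib

section
/- For each integer n ≥ 1 and q with |q| < 1, q^n/(1-q^n) = -1 + 1/(n(1-q)) + (1/n)·∑_{d | n, d > 1} ∑_{r | d} r·μ(d/r)/(1-q^r). -/
open Finset ArithmeticFunction

lemma moebius_double_sum (q : ℂ) (n : ℕ) (hn : 0 < n) :
    ∑ d ∈ n.divisors, ∑ r ∈ d.divisors,
        (r : ℂ) * (ArithmeticFunction.moebius (d / r) : ℂ) / (1 - q ^ r)
      = (n : ℂ) / (1 - q ^ n) := by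
  have key := (ArithmeticFunction.sum_eq_iff_sum_smul_moebius_eq
      (R := ℂ)
      (f := fun d => ∑ r ∈ d.divisors,
        (r : ℂ) * (ArithmeticFunction.moebius (d / r) : ℂ) / (1 - q ^ r))
      (g := fun m => (m : ℂ) / (1 - q ^ m))).mpr
  have h : ∀ (m : ℕ), m > 0 → ∑ x ∈ m.divisorsAntidiagonal,
      (ArithmeticFunction.moebius x.1) • ((x.2 : ℂ) / (1 - q ^ x.2))
      = ∑ r ∈ m.divisors,
        (r : ℂ) * (ArithmeticFunction.moebius (m / r) : ℂ) / (1 - q ^ r) := by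
    intro m hm
    rw [← Nat.sum_div_divisors m
      (fun r => (r : ℂ) * (ArithmeticFunction.moebius (m / r) : ℂ) / (1 - q ^ r))]
    rw [Nat.sum_divisorsAntidiagonal (fun a b => (ArithmeticFunction.moebius a) • ((b : ℂ) / (1 - q ^ b)))]
    refine Finset.sum_congr rfl fun d hd => ?_
    rw [Nat.div_div_self (Nat.dvd_of_mem_divisors hd) hm.ne']
    push_cast [zsmul_eq_mul]
    ring
  exact key h n hn

theorem lambert_term_expansion (n : ℕ) (hn : 1 ≤ n) (q : ℂ) (hq : ‖q‖ < 1) :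
    q ^ n / (1 - q ^ n) =
      -1 + 1 / (n * (1 - q)) +
        (1 / (n : ℂ)) *
          ∑ d ∈ n.divisors.filter (fun d => 1 < d),
            ∑ r ∈ d.divisors,
              (r : ℂ) * (ArithmeticFunction.moebius (d / r) : ℂ) / (1 - q ^ r) := by
  have hn0 : 0 < n := hn
  have hq1 : (1 : ℂ) - q ≠ 0 := by
    intro h
    rw [sub_eq_zero] at h
    rw [← h] at hq
    simp at hq
  have hqn : (1 : ℂ) - q ^ n ≠ 0 := by
    intro h
    rw [sub_eq_zero] at h
    have : ‖q ^ n‖ < 1 := by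
      rw [norm_pow]
      exact pow_lt_one₀ (norm_nonneg q) hq hn0.ne'
    rw [← h] at this
    simp at this
  have hnC : (n : ℂ) ≠ 0 := Nat.cast_ne_zero.mpr hn0.ne'
  have hsplit : n.divisors = insert 1 (n.divisors.filter (fun d => 1 < d)) := by
    ext d
    simp only [Finset.mem_insert, Finset.mem_filter, Nat.mem_divisors]
    constructor
    · rintro ⟨hd, hne⟩
      rcases Nat.lt_or_ge d 2 with h | h
      · interval_cases d
        · simp at hd; omega
        · left; rfl
      · right; exact ⟨⟨hd, hne⟩, h⟩
    · rintro (rfl | ⟨h, _⟩)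
      · exact ⟨one_dvd n, hn0.ne'⟩
      · exact h
  have hkey := moebius_double_sum q n hn0
  rw [hsplit, Finset.sum_insert (by simp)] at hkey
  have h1 : ∑ r ∈ Nat.divisors 1,
      (r : ℂ) * (ArithmeticFunction.moebius (1 / r) : ℂ) / (1 - q ^ r)
      = 1 / (1 - q) := by
    simp
  rw [h1] at hkey
  have hS : ∑ d ∈ n.divisors.filter (fun d => 1 < d),
      ∑ r ∈ d.divisors,
        (r : ℂ) * (ArithmeticFunction.moebius (d / r) : ℂ) / (1 - q ^ r)
      = (n : ℂ) / (1 - q ^ n) - 1 / (1 - q) := eq_sub_of_add_eq' hkey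
  rw [hS]
  field_simp
  ring
end

section
/- For fixed complex α and every positive integer x, σ_α(x) = ∑_{d=1}^{x} H_{⌊x/d⌋}^{(1-α)} · d^{α-1} · c_d(x), where c_d(x) is the Ramanujan sum. -/
/-- Generalized harmonic number `H_n^{(r)} = ∑_{k=1}^n k^{-r}` with complex order. -/
noncomputable def genHarmonic (n : ℕ) (r : ℂ) : ℂ :=
  ∑ k ∈ Finset.Icc 1 n, (k : ℂ) ^ (-r)

/-- Ramanujan sum `c_d(x) = ∑_{r | gcd(d,x)} r·μ(d/r)`. -/
def ramanujanSum (d x : ℕ) : ℤ :=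
  ∑ r ∈ (Nat.gcd d x).divisors, (r : ℤ) * ArithmeticFunction.moebius (d / r)

open ArithmeticFunction Finset in
/-- The auxiliary arithmetic function `n ↦ if n ∣ x then n else 0` (for `x > 0`). -/
noncomputable def auxF (x : ℕ) (hx : 0 < x) : ArithmeticFunction ℤ :=
  ⟨fun r => if r ∣ x then (r : ℤ) else 0, by simp⟩

open ArithmeticFunction Finset in
lemma ramanujanSum_eq_mul_moebius (x : ℕ) (hx : 0 < x) (d : ℕ) (hd : 0 < d) :
    ramanujanSum d x = (auxF x hx * ArithmeticFunction.moebius) d := by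
  rw [ArithmeticFunction.mul_apply, Nat.sum_divisorsAntidiagonal (fun a b => auxF x hx a * ArithmeticFunction.moebius b)]
  have hfilter : d.divisors.filter (· ∣ x) = (Nat.gcd d x).divisors := by
    ext r
    simp only [Finset.mem_filter, Nat.mem_divisors, Nat.dvd_gcd_iff]
    constructor
    · rintro ⟨⟨h1, h2⟩, h3⟩; exact ⟨⟨h1, h3⟩, Nat.gcd_ne_zero_left h2⟩
    · rintro ⟨⟨h1, h3⟩, _⟩; exact ⟨⟨h1, hd.ne'⟩, h3⟩
  unfold ramanujanSum
  rw [← hfilter, Finset.sum_filter]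
  apply Finset.sum_congr rfl
  intro r _
  simp only [auxF, ArithmeticFunction.coe_mk]
  split_ifs <;> simp

open ArithmeticFunction Finset in
lemma sum_divisors_ramanujanSum (x n : ℕ) (hx : 0 < x) :
    ∑ d ∈ n.divisors, ramanujanSum d x = if n ∣ x then (n : ℤ) else 0 := by
  have h1 : ∑ d ∈ n.divisors, ramanujanSum d x
      = ∑ d ∈ n.divisors, (auxF x hx * ArithmeticFunction.moebius) d := by
    apply Finset.sum_congr rfl
    intro d hd
    exact ramanujanSum_eq_mul_moebius x hx d (Nat.pos_of_mem_divisors hd)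
  rw [h1, ← ArithmeticFunction.coe_zeta_mul_apply]
  have h2 : (↑(ArithmeticFunction.zeta) * (auxF x hx * ArithmeticFunction.moebius) : ArithmeticFunction ℤ)
      = auxF x hx := by
    rw [mul_comm (↑(ArithmeticFunction.zeta) : ArithmeticFunction ℤ), mul_assoc, moebius_mul_coe_zeta, mul_one]
  rw [h2]
  rfl

theorem sigma_eq_sum_harmonic_ramanujan (α : ℂ) (x : ℕ) (hx : 0 < x) :
    ∑ d ∈ x.divisors, (d : ℂ) ^ α =
      ∑ d ∈ Finset.Icc 1 x,
        genHarmonic (x / d) (1 - α) * (d : ℂ) ^ (α - 1) * (ramanujanSum d x : ℂ) := by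
  classical
  -- Expand the RHS as a double sum
  have step1 : ∑ d ∈ Finset.Icc 1 x,
        genHarmonic (x / d) (1 - α) * (d : ℂ) ^ (α - 1) * (ramanujanSum d x : ℂ)
      = ∑ d ∈ Finset.Icc 1 x, ∑ k ∈ Finset.Icc 1 (x / d),
          (k : ℂ) ^ (α - 1) * (d : ℂ) ^ (α - 1) * (ramanujanSum d x : ℂ) := by
    apply Finset.sum_congr rfl
    intro d _
    rw [genHarmonic, Finset.sum_mul, Finset.sum_mul]
    apply Finset.sum_congr rfl
    intro k _
    rw [neg_sub]
  rw [step1]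
  -- Reindex the double sum over (d, k) with d*k ≤ x as a sum over n ≤ x and d ∣ n
  have step2 : ∑ d ∈ Finset.Icc 1 x, ∑ k ∈ Finset.Icc 1 (x / d),
          (k : ℂ) ^ (α - 1) * (d : ℂ) ^ (α - 1) * (ramanujanSum d x : ℂ)
      = ∑ n ∈ Finset.Icc 1 x, ∑ d ∈ n.divisors,
          ((n / d : ℕ) : ℂ) ^ (α - 1) * (d : ℂ) ^ (α - 1) * (ramanujanSum d x : ℂ) := by
    rw [Finset.sum_sigma', Finset.sum_sigma']
    refine Finset.sum_bij' (fun p _ => (⟨p.1 * p.2, p.1⟩ : Σ _ : ℕ, ℕ))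
      (fun p _ => (⟨p.2, p.1 / p.2⟩ : Σ _ : ℕ, ℕ)) ?_ ?_ ?_ ?_ ?_
    · rintro ⟨d, k⟩ hp
      simp only [Finset.mem_sigma, Finset.mem_Icc] at hp ⊢
      obtain ⟨⟨hd1, hdx⟩, hk1, hkx⟩ := hp
      have hmul : k * d ≤ x := (Nat.le_div_iff_mul_le (by omega)).1 hkx
      refine ⟨⟨?_, ?_⟩, ?_⟩
      · exact Nat.one_le_iff_ne_zero.2 (Nat.mul_ne_zero (by omega) (by omega))
      · rw [mul_comm]; exact hmul
      · exact Nat.mem_divisors.2 ⟨dvd_mul_right d k, Nat.mul_ne_zero (by omega) (by omega)⟩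
    · rintro ⟨n, d⟩ hp
      simp only [Finset.mem_sigma, Finset.mem_Icc, Nat.mem_divisors] at hp ⊢
      obtain ⟨⟨hn1, hnx⟩, hdn, hn0⟩ := hp
      have hd0 : 0 < d := Nat.pos_of_dvd_of_pos hdn (by omega)
      refine ⟨⟨hd0, le_trans (Nat.le_of_dvd (by omega) hdn) hnx⟩, ?_, ?_⟩
      · exact (Nat.one_le_div_iff hd0).2 (Nat.le_of_dvd (by omega) hdn)
      · exact Nat.div_le_div_right hnx
    · rintro ⟨d, k⟩ hp
      simp only [Finset.mem_sigma, Finset.mem_Icc] at hp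
      obtain ⟨⟨hd1, _⟩, _, _⟩ := hp
      simp [Nat.mul_div_cancel_left _ (by omega : 0 < d)]
    · rintro ⟨n, d⟩ hp
      simp only [Finset.mem_sigma, Finset.mem_Icc, Nat.mem_divisors] at hp
      obtain ⟨⟨hn1, _⟩, hdn, _⟩ := hp
      simp [Nat.mul_div_cancel' hdn]
    · rintro ⟨d, k⟩ hp
      simp only [Finset.mem_sigma, Finset.mem_Icc] at hp
      obtain ⟨⟨hd1, _⟩, _, _⟩ := hp
      simp [Nat.mul_div_cancel_left _ (by omega : 0 < d)]
  rw [step2]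
  -- Evaluate the inner sum using the Möbius computation
  have step3 : ∀ n ∈ Finset.Icc 1 x,
      ∑ d ∈ n.divisors, ((n / d : ℕ) : ℂ) ^ (α - 1) * (d : ℂ) ^ (α - 1) * (ramanujanSum d x : ℂ)
      = (n : ℂ) ^ (α - 1) * ((if n ∣ x then (n : ℤ) else 0 : ℤ) : ℂ) := by
    intro n hn
    simp only [Finset.mem_Icc] at hn
    have key : ∀ d ∈ n.divisors,
        ((n / d : ℕ) : ℂ) ^ (α - 1) * (d : ℂ) ^ (α - 1) = (n : ℂ) ^ (α - 1) := by
      intro d hd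
      rw [Nat.mem_divisors] at hd
      have := hd.1
      have hnd : (n / d) * d = n := Nat.div_mul_cancel hd.1
      calc ((n / d : ℕ) : ℂ) ^ (α - 1) * (d : ℂ) ^ (α - 1)
          = (((n / d : ℕ) : ℝ) : ℂ) ^ (α - 1) * (((d : ℕ) : ℝ) : ℂ) ^ (α - 1) := by
            norm_cast
        _ = ((((n / d : ℕ) : ℝ) : ℂ) * (((d : ℕ) : ℝ) : ℂ)) ^ (α - 1) :=
            (Complex.mul_cpow_ofReal_nonneg (by positivity) (by positivity) _).symm
        _ = (n : ℂ) ^ (α - 1) := by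
            congr 1
            push_cast
            exact_mod_cast hnd
    calc ∑ d ∈ n.divisors,
          ((n / d : ℕ) : ℂ) ^ (α - 1) * (d : ℂ) ^ (α - 1) * (ramanujanSum d x : ℂ)
        = ∑ d ∈ n.divisors, (n : ℂ) ^ (α - 1) * (ramanujanSum d x : ℂ) := by
          apply Finset.sum_congr rfl
          intro d hd
          rw [key d hd]
      _ = (n : ℂ) ^ (α - 1) * ((∑ d ∈ n.divisors, ramanujanSum d x : ℤ) : ℂ) := by
          rw [← Finset.mul_sum]; push_cast; ring
      _ = (n : ℂ) ^ (α - 1) * ((if n ∣ x then (n : ℤ) else 0 : ℤ) : ℂ) := by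
          rw [sum_divisors_ramanujanSum x n hx]
  rw [Finset.sum_congr rfl step3]
  -- Collapse the if-then-else and conclude
  have step4 : ∑ n ∈ Finset.Icc 1 x,
        (n : ℂ) ^ (α - 1) * ((if n ∣ x then (n : ℤ) else 0 : ℤ) : ℂ)
      = ∑ n ∈ Finset.Icc 1 x,
        (if n ∣ x then (n : ℂ) ^ (α - 1) * (n : ℂ) else 0) := by
    apply Finset.sum_congr rfl
    intro n _
    split_ifs <;> simp
  rw [step4, ← Finset.sum_filter]
  have hset : (Finset.Icc 1 x).filter (· ∣ x) = x.divisors := by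
    ext n
    simp only [Finset.mem_filter, Finset.mem_Icc, Nat.mem_divisors]
    constructor
    · rintro ⟨⟨h1, h2⟩, h3⟩; exact ⟨h3, hx.ne'⟩
    · rintro ⟨h1, _⟩
      have hn0 : 0 < n := Nat.pos_of_dvd_of_pos h1 hx
      exact ⟨⟨hn0, Nat.le_of_dvd hx h1⟩, h1⟩
  rw [hset]
  apply Finset.sum_congr rfl
  intro n hn
  have hn0 : (n : ℂ) ≠ 0 := by
    have := Nat.pos_of_mem_divisors hn
    exact_mod_cast Nat.cast_ne_zero.2 this.ne'
  rw [Complex.cpow_sub _ _ hn0, Complex.cpow_one, div_mul_cancel₀ _ hn0]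
end

section
/- For every positive integer x, σ_α(x) = ∑_{d=1}^{x} H_{⌊x/d⌋}^{(1-α)} · d^{α-1} · μ(d/gcd(d,x)) · φ(d)/φ(d/gcd(d,x)). -/
open Finset ArithmeticFunction

/-- Hölder-form Ramanujan sum c_d(x) as an arithmetic function of d. -/
noncomputable def cFun (x : ℕ) : ArithmeticFunction ℂ :=
  ⟨fun d => (ArithmeticFunction.moebius (d / Nat.gcd d x) : ℂ) *
      ((Nat.totient d : ℂ) / (Nat.totient (d / Nat.gcd d x) : ℂ)), by simp⟩

lemma cFun_apply (x d : ℕ) : cFun x d =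
    (ArithmeticFunction.moebius (d / Nat.gcd d x) : ℂ) *
      ((Nat.totient d : ℂ) / (Nat.totient (d / Nat.gcd d x) : ℂ)) := rfl

lemma cFun_mult (x : ℕ) : (cFun x).IsMultiplicative := by
  constructor
  · simp [cFun_apply]
  · intro m n cop
    rcases Nat.eq_zero_or_pos m with rfl | hm
    · have : n = 1 := by simpa [Nat.Coprime] using cop
      subst this; simp [cFun_apply]
    rcases Nat.eq_zero_or_pos n with rfl | hn
    · have : m = 1 := by simpa [Nat.Coprime] using cop
      subst this; simp [cFun_apply]
    have hg : Nat.gcd (m * n) x = Nat.gcd m x * Nat.gcd n x := by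
      rw [Nat.gcd_comm, Nat.Coprime.gcd_mul x cop, Nat.gcd_comm x m, Nat.gcd_comm x n]
    have hdiv : m * n / (Nat.gcd m x * Nat.gcd n x)
        = (m / Nat.gcd m x) * (n / Nat.gcd n x) :=
      (Nat.div_mul_div_comm (Nat.gcd_dvd_left m x) (Nat.gcd_dvd_left n x)).symm
    have cop' : (m / Nat.gcd m x).Coprime (n / Nat.gcd n x) :=
      Nat.Coprime.coprime_dvd_left (Nat.div_dvd_of_dvd (Nat.gcd_dvd_left m x))
        (Nat.Coprime.coprime_dvd_right (Nat.div_dvd_of_dvd (Nat.gcd_dvd_left n x)) cop)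
    simp only [cFun_apply, hg, hdiv]
    rw [isMultiplicative_moebius.map_mul_of_coprime cop', Nat.totient_mul cop,
      Nat.totient_mul cop']
    push_cast
    ring

lemma gcd_prime_pow_eq (p k x : ℕ) (hp : p.Prime) (hx : x ≠ 0) :
    Nat.gcd (p ^ k) x = p ^ min k (x.factorization p) := by
  obtain ⟨j, hjk, hj⟩ := (Nat.dvd_prime_pow hp).mp (Nat.gcd_dvd_left (p ^ k) x)
  have hja : j ≤ x.factorization p := by
    rw [← Nat.Prime.pow_dvd_iff_le_factorization hp hx, ← hj]
    exact Nat.gcd_dvd_right _ _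
  have hmin : p ^ min k (x.factorization p) ∣ Nat.gcd (p ^ k) x := by
    apply Nat.dvd_gcd
    · exact pow_dvd_pow p (min_le_left _ _)
    · rw [Nat.Prime.pow_dvd_iff_le_factorization hp hx]; exact min_le_right _ _
  have hle : min k (x.factorization p) ≤ j := by
    rw [hj] at hmin
    exact (Nat.pow_dvd_pow_iff_le_right hp.one_lt).mp hmin
  have : j = min k (x.factorization p) := le_antisymm (le_min hjk hja) hle
  rw [hj, this]

lemma cFun_prime_pow (x p k : ℕ) (hp : p.Prime) (hx : x ≠ 0) :
    cFun x (p ^ k) =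
      if k ≤ x.factorization p then (Nat.totient (p ^ k) : ℂ)
      else if k = x.factorization p + 1 then -((p : ℂ) ^ x.factorization p) else 0 := by
  set a := x.factorization p with ha
  have hdivpow : p ^ k / p ^ min k a = p ^ (k - min k a) :=
    Nat.pow_div (min_le_left _ _) hp.pos
  rw [cFun_apply, gcd_prime_pow_eq p k x hp hx, ← ha, hdivpow]
  by_cases h1 : k ≤ a
  · rw [if_pos h1, min_eq_left h1, Nat.sub_self]
    simp
  · rw [if_neg h1]
    push_neg at h1
    have hmin : min k a = a := min_eq_right h1.le
    rw [hmin]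
    by_cases h2 : k = a + 1
    · rw [if_pos h2, h2, Nat.add_sub_cancel_left, pow_one,
        ArithmeticFunction.moebius_apply_prime hp]
      have htot : Nat.totient (p ^ (a + 1)) = p ^ a * Nat.totient p := by
        rw [Nat.totient_prime_pow hp (Nat.succ_pos a), Nat.totient_prime hp]
        norm_num
      have hφ : (Nat.totient p : ℂ) ≠ 0 := by
        exact_mod_cast (Nat.totient_pos.mpr hp.pos).ne'
      rw [htot]
      push_cast
      field_simp
    · rw [if_neg h2]
      have hk2 : 2 ≤ k - a := by omega
      rw [ArithmeticFunction.moebius_apply_prime_pow hp (by omega), if_neg (by omega)]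
      simp

/-- The `target` arithmetic function `n ↦ n·[n ∣ x]`. -/
noncomputable def dFun (x : ℕ) : ArithmeticFunction ℂ :=
  ⟨fun n => if n ∣ x ∧ n ≠ 0 then (n : ℂ) else 0, by simp⟩

lemma dFun_apply (x n : ℕ) : dFun x n = if n ∣ x ∧ n ≠ 0 then (n : ℂ) else 0 := rfl

lemma dFun_mult (x : ℕ) : (dFun x).IsMultiplicative := by
  constructor
  · simp [dFun_apply]
  · intro m n cop
    simp only [dFun_apply]
    by_cases hm : m ∣ x ∧ m ≠ 0
    · by_cases hn : n ∣ x ∧ n ≠ 0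
      · rw [if_pos ⟨cop.mul_dvd_of_dvd_of_dvd hm.1 hn.1, mul_ne_zero hm.2 hn.2⟩,
          if_pos hm, if_pos hn]
        push_cast; ring
      · rw [if_neg hn, mul_zero, if_neg]
        intro ⟨h1, h2⟩
        exact hn ⟨(dvd_mul_left n m).trans h1, fun h => h2 (by simp [h])⟩
    · rw [if_neg hm, zero_mul, if_neg]
      intro ⟨h1, h2⟩
      exact hm ⟨(dvd_mul_right m n).trans h1, fun h => h2 (by simp [h])⟩

lemma sum_divisors_cFun (x : ℕ) (hx : x ≠ 0) :
    cFun x * (ArithmeticFunction.zeta : ArithmeticFunction ℂ) = dFun x := by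
  rw [ArithmeticFunction.IsMultiplicative.eq_iff_eq_on_prime_powers _
    ((cFun_mult x).mul ArithmeticFunction.isMultiplicative_zeta.natCast) _ (dFun_mult x)]
  intro p k hp
  rw [ArithmeticFunction.coe_mul_zeta_apply, Nat.sum_divisors_prime_pow hp]
  set a := x.factorization p with ha
  have hpk0 : (p : ℕ) ^ k ≠ 0 := pow_ne_zero k hp.pos.ne'
  rw [dFun_apply]
  by_cases h1 : k ≤ a
  · rw [if_pos ⟨(Nat.Prime.pow_dvd_iff_le_factorization hp hx).mpr h1, hpk0⟩]
    have : ∀ i ∈ Finset.range (k + 1), cFun x (p ^ i) = (Nat.totient (p ^ i) : ℂ) := by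
      intro i hi
      rw [cFun_prime_pow x p i hp hx, if_pos (by simp at hi; omega)]
    rw [Finset.sum_congr rfl this]
    rw [← Nat.cast_sum, ← Nat.sum_divisors_prime_pow hp (f := Nat.totient),
      Nat.sum_totient]
  · rw [if_neg (by
      push_neg at h1
      intro ⟨hdvd, _⟩
      exact absurd ((Nat.Prime.pow_dvd_iff_le_factorization hp hx).mp hdvd) (by omega))]
    push_neg at h1
    have hsub : Finset.range (a + 2) ⊆ Finset.range (k + 1) := by
      apply Finset.range_subset_range.mpr; omega
    rw [← Finset.sum_subset hsub (by
      intro i hi hni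
      simp only [Finset.mem_range] at hi hni
      rw [cFun_prime_pow x p i hp hx, if_neg (by omega), if_neg (by omega)])]
    rw [Finset.sum_range_succ]
    have : ∀ i ∈ Finset.range (a + 1), cFun x (p ^ i) = (Nat.totient (p ^ i) : ℂ) := by
      intro i hi
      rw [cFun_prime_pow x p i hp hx, if_pos (by simp at hi; omega)]
    rw [Finset.sum_congr rfl this, cFun_prime_pow x p (a + 1) hp hx,
      if_neg (by omega), if_pos rfl, ← Nat.cast_sum,
      ← Nat.sum_divisors_prime_pow hp (f := Nat.totient), Nat.sum_totient]
    push_cast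
    ring

theorem sigma_eq_sum_harmonic_moebius_totient (α : ℂ) (x : ℕ) (hx : 0 < x) :
    ∑ d ∈ x.divisors, (d : ℂ) ^ α =
      ∑ d ∈ Finset.Icc 1 x,
        genHarmonic (x / d) (1 - α) * (d : ℂ) ^ (α - 1) *
          (ArithmeticFunction.moebius (d / Nat.gcd d x) : ℂ) *
          ((Nat.totient d : ℂ) / (Nat.totient (d / Nat.gcd d x) : ℂ)) := by
  have hx0 : x ≠ 0 := hx.ne'
  -- Step 1: rewrite each summand as a double sum
  have step1 : ∀ d ∈ Finset.Icc 1 x,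
      genHarmonic (x / d) (1 - α) * (d : ℂ) ^ (α - 1) *
          (ArithmeticFunction.moebius (d / Nat.gcd d x) : ℂ) *
          ((Nat.totient d : ℂ) / (Nat.totient (d / Nat.gcd d x) : ℂ))
        = ∑ k ∈ Finset.Icc 1 (x / d), (((d * k : ℕ) : ℂ) ^ (α - 1)) * cFun x d := by
    intro d hd
    simp only [Finset.mem_Icc] at hd
    have hd1 : 1 ≤ d := hd.1
    rw [genHarmonic, neg_sub, Finset.sum_mul, Finset.sum_mul, Finset.sum_mul]
    apply Finset.sum_congr rfl
    intro k hk
    simp only [Finset.mem_Icc] at hk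
    have hmul : ((d * k : ℕ) : ℂ) ^ (α - 1) = (k : ℂ) ^ (α - 1) * (d : ℂ) ^ (α - 1) := by
      have := Complex.mul_cpow_ofReal_nonneg (a := (k : ℝ)) (b := (d : ℝ))
        (Nat.cast_nonneg k) (Nat.cast_nonneg d) (α - 1)
      push_cast at this ⊢
      rw [mul_comm (d : ℂ) (k : ℂ), this]
    rw [hmul, cFun_apply]
    ring
  rw [Finset.sum_congr rfl step1]
  -- Step 2: reindex the double sum over pairs (d, k) ↦ (n, d) with n = d * k
  rw [← Finset.sum_sigma (Finset.Icc 1 x) (fun d => Finset.Icc 1 (x / d))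
    (fun p => (((p.1 * p.2 : ℕ) : ℂ) ^ (α - 1)) * cFun x p.1)]
  rw [Finset.sum_nbij' (i := fun p => (⟨p.1 * p.2, p.1⟩ : Σ _ : ℕ, ℕ))
    (j := fun q => (⟨q.2, q.1 / q.2⟩ : Σ _ : ℕ, ℕ))
    (t := (Finset.Icc 1 x).sigma (fun n => n.divisors))
    (g := fun q => ((q.1 : ℂ) ^ (α - 1)) * cFun x q.2)
    (by
      rintro ⟨d, k⟩ hp
      simp only [Finset.mem_sigma, Finset.mem_Icc] at hp ⊢
      obtain ⟨⟨hd1, hdx⟩, hk1, hkx⟩ := hp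
      have hdk : d * k ≤ x := by
        rw [mul_comm]; exact (Nat.le_div_iff_mul_le (by omega)).mp hkx
      constructor
      · exact ⟨Nat.one_le_iff_ne_zero.mpr (by positivity), hdk⟩
      · exact Nat.mem_divisors.mpr ⟨Dvd.intro k rfl, by positivity⟩)
    (by
      rintro ⟨n, d⟩ hq
      simp only [Finset.mem_sigma, Finset.mem_Icc, Nat.mem_divisors] at hq ⊢
      obtain ⟨⟨hn1, hnx⟩, hdn, hn0⟩ := hq
      have hd1 : 1 ≤ d := Nat.one_le_iff_ne_zero.mpr (fun h => hn0 (by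
        subst h; simpa using hdn))
      refine ⟨⟨hd1, (Nat.le_of_dvd (by omega) hdn).trans hnx⟩, ?_, ?_⟩
      · exact Nat.one_le_div_iff (by omega) |>.mpr (Nat.le_of_dvd (by omega) hdn)
      · exact Nat.div_le_div_right hnx)
    (by
      rintro ⟨d, k⟩ hp
      simp only [Finset.mem_sigma, Finset.mem_Icc] at hp
      obtain ⟨⟨hd1, _⟩, _, _⟩ := hp
      simp [Nat.mul_div_cancel_left k (by omega : 0 < d)])
    (by
      rintro ⟨n, d⟩ hq
      simp only [Finset.mem_sigma, Finset.mem_Icc, Nat.mem_divisors] at hq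
      obtain ⟨_, hdn, _⟩ := hq
      simp [Nat.mul_div_cancel' hdn])
    (by rintro ⟨d, k⟩ _; rfl)]
  -- Step 3: evaluate the inner divisor sum via the arithmetic-function identity
  rw [Finset.sum_sigma]
  have step3 : ∀ n ∈ Finset.Icc 1 x,
      (∑ d ∈ n.divisors, ((n : ℂ) ^ (α - 1)) * cFun x d)
        = if n ∣ x then (n : ℂ) ^ α else 0 := by
    intro n hn
    simp only [Finset.mem_Icc] at hn
    have hn0 : (n : ℂ) ≠ 0 := by exact_mod_cast (by omega : n ≠ 0)
    rw [← Finset.mul_sum, ← ArithmeticFunction.coe_mul_zeta_apply,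
      sum_divisors_cFun x hx0, dFun_apply]
    by_cases h : n ∣ x
    · rw [if_pos ⟨h, by omega⟩, if_pos h, Complex.cpow_sub _ _ hn0,
        Complex.cpow_one]
      field_simp
    · rw [if_neg (fun hh => h hh.1), if_neg h, mul_zero]
  rw [Finset.sum_congr rfl step3, ← Finset.sum_filter]
  apply Finset.sum_congr _ (fun _ _ => rfl)
  rw [Nat.divisors, ← Finset.Ico_add_one_right_eq_Icc]
end
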